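/- Let a, b ∈ ℝ with b ≠ 0, and let p : ℝ → ℝ be continuous on [0,1]. There is no function w : ℝ → ℝ, four times continuously differentiable on [0,1], with ∫₀¹ w(x)² dx > 0, satisfying the clamped boundary conditions w(0) = w(1) = 0 and w'(0) = w'(1) = 0, such that for all x ∈ [0,1] both a·w⁗(x) − b·(2·κ(w)·w''(x) − κ(w)²·w(x)) = p(x) and (a − b)·w⁗(x) = p(x) hold, where κ(w) = (∫₀¹ w·w'')/(∫₀¹ w²). -/

import Mathlib

/-- `D n w` is the `n`-th derivative of `w` on the interval `[0,1]`. -/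
noncomputable def D (n : ℕ) (w : ℝ → ℝ) : ℝ → ℝ :=
  iteratedDerivWithin n w (Set.Icc (0 : ℝ) 1)

/-- The Rayleigh-type quotient `κ(w) = (∫₀¹ w w'') / (∫₀¹ w²)`. -/
noncomputable def kappa (w : ℝ → ℝ) : ℝ :=
  (∫ x in (0:ℝ)..1, w x * D 2 w x) / (∫ x in (0:ℝ)..1, (w x) ^ 2)

open Set MeasureTheory intervalIntegral

private lemma uDiff : UniqueDiffOn ℝ (Set.Icc (0:ℝ) 1) := uniqueDiffOn_Icc zero_lt_one

private lemma D_zero (w : ℝ → ℝ) : D 0 w = w := iteratedDerivWithin_zero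

private lemma contD {w : ℝ → ℝ} (hw : ContDiffOn ℝ 4 w (Set.Icc (0:ℝ) 1))
    (n : ℕ) (hn : n ≤ 4) : ContinuousOn (D n w) (Set.Icc (0:ℝ) 1) :=
  hw.continuousOn_iteratedDerivWithin (by exact_mod_cast hn) uDiff

private lemma hasD {w : ℝ → ℝ} (hw : ContDiffOn ℝ 4 w (Set.Icc (0:ℝ) 1))
    (n : ℕ) (hn : n < 4) {x : ℝ} (hx : x ∈ Set.Icc (0:ℝ) 1) :
    HasDerivWithinAt (D n w) (D (n+1) w x) (Set.Icc (0:ℝ) 1) x := by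
  have hdiff : DifferentiableWithinAt ℝ (D n w) (Set.Icc (0:ℝ) 1) x :=
    (hw.differentiableOn_iteratedDerivWithin (by exact_mod_cast hn) uDiff) x hx
  have h := hdiff.hasDerivWithinAt
  have heq : D (n+1) w x = derivWithin (D n w) (Set.Icc (0:ℝ) 1) x :=
    congrFun iteratedDerivWithin_succ x
  rw [heq]; exact h

private lemma intInt {f : ℝ → ℝ} (h : ContinuousOn f (Set.Icc (0:ℝ) 1)) :
    IntervalIntegrable f volume 0 1 := by
  apply ContinuousOn.intervalIntegrable
  rwa [Set.uIcc_of_le zero_le_one]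

private lemma ftc {f f' : ℝ → ℝ}
    (hf : ∀ x ∈ Set.Icc (0:ℝ) 1, HasDerivWithinAt f (f' x) (Set.Icc (0:ℝ) 1) x)
    (hf' : ContinuousOn f' (Set.Icc (0:ℝ) 1)) :
    ∫ x in (0:ℝ)..1, f' x = f 1 - f 0 := by
  apply integral_eq_sub_of_hasDeriv_right_of_le zero_le_one
  · exact fun x hx => (hf x hx).continuousWithinAt
  · intro x hx
    have h := hf x (Set.Ioo_subset_Icc_self hx)
    exact (h.hasDerivAt (Icc_mem_nhds hx.1 hx.2)).hasDerivWithinAt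
  · exact intInt hf'

/-- Laminated-strip incompatibility: for a Poisson-coupling coefficient `b ≠ 0`,
no clamped strip deflection can solve simultaneously the PGD limit strip equation
`a w⁗ − b (2κ(w) w'' − κ(w)² w) = p` and the Classical Laminated Plate Theory strip
equation `(a − b) w⁗ = p`. -/
theorem no_clamped_laminated_solution_of_both_equations
    (a b : ℝ) (hb : b ≠ 0)
    (p : ℝ → ℝ) (hp : ContinuousOn p (Set.Icc (0 : ℝ) 1)) :
    ¬ ∃ w : ℝ → ℝ, ContDiffOn ℝ 4 w (Set.Icc (0 : ℝ) 1) ∧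
        (0 < ∫ x in (0:ℝ)..1, (w x) ^ 2) ∧
        w 0 = 0 ∧ w 1 = 0 ∧ D 1 w 0 = 0 ∧ D 1 w 1 = 0 ∧
        (∀ x ∈ Set.Icc (0 : ℝ) 1,
          a * D 4 w x - b * (2 * kappa w * D 2 w x - (kappa w) ^ 2 * w x) = p x) ∧
        (∀ x ∈ Set.Icc (0 : ℝ) 1, (a - b) * D 4 w x = p x) := by
  rintro ⟨w, hw, hA, hw0, hw1, hw'0, hw'1, heq1, heq2⟩
  set s : Set ℝ := Set.Icc (0:ℝ) 1 with hs
  set κ := kappa w with hκ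
  -- continuity of w on s
  have hwc : ContinuousOn w s := hw.continuousOn
  have h0mem : (0:ℝ) ∈ s := Set.left_mem_Icc.2 zero_le_one
  have h1mem : (1:ℝ) ∈ s := Set.right_mem_Icc.2 zero_le_one
  -- the ODE obtained by subtracting the two equations
  have hode : ∀ x ∈ s, D 4 w x = 2 * κ * D 2 w x - κ ^ 2 * w x := by
    intro x hx
    have h1 := heq1 x hx
    have h2 := heq2 x hx
    have : b * (D 4 w x - (2 * κ * D 2 w x - κ ^ 2 * w x)) = 0 := by ring_nf; linarith [h1, h2]
    have := mul_eq_zero.1 this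
    rcases this with h | h
    · exact absurd h hb
    · linarith
  -- basic integrability facts
  have hw2c := contD hw 2 (by norm_num)
  have hw1c := contD hw 1 (by norm_num)
  have hw3c := contD hw 3 (by norm_num)
  have hw4c := contD hw 4 le_rfl
  -- FTC computations
  -- 1) ∫ (w1^2 + w * w2) = 0
  have key1 : ∫ x in (0:ℝ)..1, (D 1 w x * D 1 w x + w x * D 2 w x) = 0 := by
    have h := ftc (f := fun x => w x * D 1 w x)
      (f' := fun x => D 1 w x * D 1 w x + w x * D 2 w x) ?_ ?_
    · rw [h, hw0, hw1]; ring
    · intro x hx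
      have h0 : HasDerivWithinAt w (D 1 w x) s x := by
        have := hasD hw 0 (by norm_num) hx
        rwa [D_zero] at this
      exact (h0.mul (hasD hw 1 (by norm_num) hx)).congr_deriv (by ring)
    · exact (hw1c.mul hw1c).add (hwc.mul hw2c)
  -- 2) ∫ (w1 * w3 + w * w4) = 0
  have key2 : ∫ x in (0:ℝ)..1, (D 1 w x * D 3 w x + w x * D 4 w x) = 0 := by
    have h := ftc (f := fun x => w x * D 3 w x)
      (f' := fun x => D 1 w x * D 3 w x + w x * D 4 w x) ?_ ?_
    · rw [h, hw0, hw1]; ring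
    · intro x hx
      have h0 : HasDerivWithinAt w (D 1 w x) s x := by
        have := hasD hw 0 (by norm_num) hx
        rwa [D_zero] at this
      exact (h0.mul (hasD hw 3 (by norm_num) hx)).congr_deriv (by ring)
    · exact (hw1c.mul hw3c).add (hwc.mul hw4c)
  -- 3) ∫ (w2^2 + w1 * w3) = 0
  have key3 : ∫ x in (0:ℝ)..1, (D 2 w x * D 2 w x + D 1 w x * D 3 w x) = 0 := by
    have h := ftc (f := fun x => D 1 w x * D 2 w x)
      (f' := fun x => D 2 w x * D 2 w x + D 1 w x * D 3 w x) ?_ ?_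
    · rw [h, hw'0, hw'1]; ring
    · intro x hx
      exact ((hasD hw 1 (by norm_num) hx).mul (hasD hw 2 (by norm_num) hx)).congr_deriv (by ring)
    · exact (hw2c.mul hw2c).add (hw1c.mul hw3c)
  -- notation for integrals
  have hAne : (∫ x in (0:ℝ)..1, (w x)^2) ≠ 0 := ne_of_gt hA
  have hκA : κ * ∫ x in (0:ℝ)..1, (w x)^2 = ∫ x in (0:ℝ)..1, w x * D 2 w x := by
    rw [hκ, kappa, div_mul_cancel₀ _ hAne]
  -- split the sums
  have i11 : IntervalIntegrable (fun x => D 1 w x * D 1 w x) volume 0 1 := intInt (hw1c.mul hw1c)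
  have i02 : IntervalIntegrable (fun x => w x * D 2 w x) volume 0 1 := intInt (hwc.mul hw2c)
  have i13 : IntervalIntegrable (fun x => D 1 w x * D 3 w x) volume 0 1 := intInt (hw1c.mul hw3c)
  have i04 : IntervalIntegrable (fun x => w x * D 4 w x) volume 0 1 := intInt (hwc.mul hw4c)
  have i22 : IntervalIntegrable (fun x => D 2 w x * D 2 w x) volume 0 1 := intInt (hw2c.mul hw2c)
  have e1 : (∫ x in (0:ℝ)..1, D 1 w x * D 1 w x) + ∫ x in (0:ℝ)..1, w x * D 2 w x = 0 := by
    rw [← integral_add i11 i02]; exact key1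
  have e2 : (∫ x in (0:ℝ)..1, D 1 w x * D 3 w x) + ∫ x in (0:ℝ)..1, w x * D 4 w x = 0 := by
    rw [← integral_add i13 i04]; exact key2
  have e3 : (∫ x in (0:ℝ)..1, D 2 w x * D 2 w x) + ∫ x in (0:ℝ)..1, D 1 w x * D 3 w x = 0 := by
    rw [← integral_add i22 i13]; exact key3
  -- ∫ w * w4 using the ODE
  have e4 : ∫ x in (0:ℝ)..1, w x * D 4 w x
      = 2 * κ * (∫ x in (0:ℝ)..1, w x * D 2 w x) - κ^2 * ∫ x in (0:ℝ)..1, (w x)^2 := by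
    have : ∫ x in (0:ℝ)..1, w x * D 4 w x
        = ∫ x in (0:ℝ)..1, (2 * κ * (w x * D 2 w x) - κ^2 * (w x)^2) := by
      apply integral_congr
      intro x hx
      rw [Set.uIcc_of_le zero_le_one] at hx
      show w x * D 4 w x = 2 * κ * (w x * D 2 w x) - κ^2 * (w x)^2
      rw [hode x hx]; ring
    rw [this, integral_sub ((i02.const_mul _)) ((intInt (f := fun x => (w x)^2) (hwc.pow 2)).const_mul _),
      intervalIntegral.integral_const_mul, intervalIntegral.integral_const_mul]
  -- key integral identity: ∫ (w2 - κ w)^2 = 0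
  have eC : ∫ x in (0:ℝ)..1, (D 2 w x - κ * w x)^2 = 0 := by
    have expand : ∫ x in (0:ℝ)..1, (D 2 w x - κ * w x)^2
        = (∫ x in (0:ℝ)..1, D 2 w x * D 2 w x)
          - 2 * κ * (∫ x in (0:ℝ)..1, w x * D 2 w x)
          + κ^2 * ∫ x in (0:ℝ)..1, (w x)^2 := by
      have : ∀ x, (D 2 w x - κ * w x)^2
          = D 2 w x * D 2 w x - 2 * κ * (w x * D 2 w x) + κ^2 * (w x)^2 := by
        intro x; ring
      rw [integral_congr (fun x _ => this x),
        integral_add (i22.sub (i02.const_mul _)) ((intInt (f := fun x => (w x)^2) (hwc.pow 2)).const_mul _),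
        integral_sub i22 (i02.const_mul _), intervalIntegral.integral_const_mul, intervalIntegral.integral_const_mul]
    rw [expand]
    -- ∫ w2^2 = ∫ w w4 = 2κ∫ww2 - κ²∫w², and ∫ww2 = κ∫w²
    have h22 : (∫ x in (0:ℝ)..1, D 2 w x * D 2 w x) = ∫ x in (0:ℝ)..1, w x * D 4 w x := by
      linarith
    rw [h22, e4, ← hκA]; ring
  -- pointwise: w2 = κ w on s
  have hpt : ∀ x ∈ s, D 2 w x = κ * w x := by
    intro x hx
    by_contra hne
    have hne' : D 2 w x - κ * w x ≠ 0 := sub_ne_zero.2 hne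
    have hgpos : 0 < (D 2 w x - κ * w x)^2 := by positivity
    have : 0 < ∫ t in (0:ℝ)..1, (D 2 w t - κ * w t)^2 := by
      apply integral_pos zero_lt_one
      · exact ((hw2c.sub (hwc.const_smul κ)).pow 2)
      · intro t _; positivity
      · exact ⟨x, hx, hgpos⟩
    rw [eC] at this; exact lt_irrefl _ this
  -- κ ≤ 0
  have hκle : κ ≤ 0 := by
    have hnn : 0 ≤ ∫ x in (0:ℝ)..1, D 1 w x * D 1 w x := by
      apply intervalIntegral.integral_nonneg zero_le_one
      intro x _; exact mul_self_nonneg _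
    have hle : κ * ∫ x in (0:ℝ)..1, (w x)^2 ≤ 0 := by rw [hκA]; linarith
    nlinarith [hle, hA]
  -- energy argument: E = w1^2 - κ w^2 is constant = 0
  set E : ℝ → ℝ := fun x => D 1 w x * D 1 w x - κ * (w x * w x) with hE
  have hEderiv : ∀ x ∈ s, HasDerivWithinAt E 0 s x := by
    intro x hx
    have h0 : HasDerivWithinAt w (D 1 w x) s x := by
      have := hasD hw 0 (by norm_num) hx
      rwa [D_zero] at this
    have h1 := hasD hw 1 (by norm_num) hx
    have := ((h1.mul h1).sub (HasDerivWithinAt.const_mul κ (h0.mul h0)))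
    refine this.congr_deriv ?_
    rw [hpt x hx]; ring
  have hEcont : ContinuousOn E s := (hw1c.mul hw1c).sub (continuousOn_const.mul (hwc.mul hwc))
  have hEconst : ∀ x ∈ s, E x = E 0 := by
    apply constant_of_has_deriv_right_zero hEcont
    intro x hx
    exact (hEderiv x (Set.Ico_subset_Icc_self hx)).mono_of_mem_nhdsWithin
      (Icc_mem_nhdsGE_of_mem hx)
  have hE0 : E 0 = 0 := by simp [hE, hw'0, hw0]
  -- w1 = 0 on s
  have hw1zero : ∀ x ∈ s, D 1 w x = 0 := by
    intro x hx
    have h := hEconst x hx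
    rw [hE0] at h
    have h2 : D 1 w x * D 1 w x = κ * (w x * w x) := by
      simpa [hE, sub_eq_zero] using h
    have hle : D 1 w x * D 1 w x ≤ 0 := by
      rw [h2]
      exact mul_nonpos_of_nonpos_of_nonneg hκle (mul_self_nonneg _)
    have := mul_self_nonneg (D 1 w x)
    nlinarith
  -- w constant on s, so w = 0 on s
  have hwzero : ∀ x ∈ s, w x = 0 := by
    have hdiff : DifferentiableOn ℝ w s := hw.differentiableOn (by norm_num)
    have := constant_of_derivWithin_zero hdiff ?_
    · intro x hx
      rw [this x hx, hw0]
    · intro x hx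
      have h := hw1zero x (Set.Ico_subset_Icc_self hx)
      rwa [D, iteratedDerivWithin_one] at h
  -- contradiction with 0 < ∫ w²
  have : (∫ x in (0:ℝ)..1, (w x)^2) = 0 := by
    have heqz : Set.EqOn (fun x => (w x)^2) (fun _ => (0:ℝ)) (Set.uIcc (0:ℝ) 1) := by
      intro x hx
      rw [Set.uIcc_of_le zero_le_one] at hx
      simp [hwzero x hx]
    rw [integral_congr heqz]
    simp
  rw [this] at hA; exact lt_irrefl _ hA
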